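/- Let $A$ be a unital complex Banach $\star$-algebra with unit $1$, $X$ a complex Banach space, $z \in A$ fixed, and $\phi : A \times A \to X$ a continuous bilinear map such that $\phi(a, b^\star) = \phi(z, 1)$ whenever $a b^\star = z$. Then there exists a continuous linear map $\Phi : A \to X$ such that $\phi(za, b) + \phi(zb, a) = \Phi(ab + ba)$ for all $a, b \in A$. Moreover one may take $\Phi(a) = \phi(za, 1)$. -/

import Mathlib

open NormedSpace

theorem stmt_4 (A X : Type*) [NormedRing A] [NormedAlgebra ℂ A] [CompleteSpace A]
    [StarRing A] [StarModule ℂ A] [ContinuousStar A]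
    [NormedAddCommGroup X] [NormedSpace ℂ X] [CompleteSpace X]
    (z : A) (φ : A →L[ℂ] A →L[ℂ] X)
    (h : ∀ a b : A, a * star b = z → φ a (star b) = φ z 1) :
    ∃ Φ : A →L[ℂ] X, (∀ a : A, Φ a = φ (z * a) 1) ∧
      ∀ a b : A, φ (z * a) b + φ (z * b) a = Φ (a * b + b * a) := by
  -- exp inverse fact
  have hinv : ∀ (a : A) (t : ℂ), exp ((-t) • a) * exp (t • a) = 1 := by
    intro a t
    letI : NormedAlgebra ℚ A := NormedAlgebra.restrictScalars ℚ ℂ A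
    rw [← exp_add_of_commute (((Commute.refl a).smul_left (-t)).smul_right t)]
    rw [← add_smul, neg_add_cancel, zero_smul, exp_zero]
  -- constancy
  have hconst : ∀ (a : A) (t : ℂ),
      φ (z * exp ((-t) • a)) (exp (t • a)) = φ z 1 := by
    intro a t
    have := h (z * exp ((-t) • a)) (star (exp (t • a))) (by
      rw [star_star, mul_assoc, hinv, mul_one])
    rwa [star_star] at this
  -- derivative of L t = exp((-t)•a)
  have hL : ∀ (a : A) (s : ℂ),
      HasDerivAt (fun t : ℂ => exp ((-t) • a)) (-(exp ((-s) • a) * a)) s := by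
    intro a s
    have h1 : HasDerivAt (fun u : ℂ => exp (u • a)) (exp ((-s) • a) * a) (-s) :=
      hasDerivAt_exp_smul_const a (-s)
    have h2 : HasDerivAt (fun t : ℂ => -t) (-1 : ℂ) s := (hasDerivAt_id s).neg
    simpa [Function.comp_def] using h1.scomp s h2
  have hR : ∀ (a : A) (s : ℂ),
      HasDerivAt (fun t : ℂ => exp (t • a)) (exp (s • a) * a) s := fun a s =>
    hasDerivAt_exp_smul_const a s
  -- first derivative identity
  have hG : ∀ (a : A) (s : ℂ),
      φ (z * -(exp ((-s) • a) * a)) (exp (s • a))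
        + φ (z * exp ((-s) • a)) (exp (s • a) * a) = 0 := by
    intro a s
    have hc : HasDerivAt (fun t : ℂ => φ (z * exp ((-t) • a)))
        (φ (z * -(exp ((-s) • a) * a))) s :=
      φ.hasFDerivAt.comp_hasDerivAt s ((hL a s).const_mul z)
    have hF : HasDerivAt (fun t : ℂ => φ (z * exp ((-t) • a)) (exp (t • a)))
        (φ (z * -(exp ((-s) • a) * a)) (exp (s • a))
          + φ (z * exp ((-s) • a)) (exp (s • a) * a)) s :=
      hc.clm_apply (hR a s)
    have hF0 : HasDerivAt (fun t : ℂ => φ (z * exp ((-t) • a)) (exp (t • a)))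
        (0 : X) s := by
      have : (fun t : ℂ => φ (z * exp ((-t) • a)) (exp (t • a))) = fun _ => φ z 1 :=
        funext (hconst a)
      rw [this]; exact hasDerivAt_const _ _
    exact hF.unique hF0
  -- key0 : φ z c = φ (z*c) 1
  have key0 : ∀ c : A, φ z c = φ (z * c) 1 := by
    intro c
    have := hG c 0
    simp only [neg_zero, zero_smul, exp_zero, one_mul, mul_one, mul_neg, map_neg,
      ContinuousLinearMap.neg_apply] at this
    exact (neg_add_eq_zero.mp this).symm
  -- second derivative: φ(z*a) a = φ(z*(a*a)) 1
  have sq : ∀ a : A, φ (z * a) a = φ (z * (a * a)) 1 := by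
    intro a
    have d1a : HasDerivAt (fun t : ℂ => z * -(exp ((-t) • a) * a))
        (z * -(-(exp ((-(0:ℂ)) • a) * a) * a)) 0 :=
      (((hL a 0).mul_const a).neg).const_mul z
    have d1 : HasDerivAt (fun t : ℂ => φ (z * -(exp ((-t) • a) * a)))
        (φ (z * -(-(exp ((-(0:ℂ)) • a) * a) * a))) 0 :=
      φ.hasFDerivAt.comp_hasDerivAt 0 d1a
    have hc : HasDerivAt (fun t : ℂ => φ (z * exp ((-t) • a)))
        (φ (z * -(exp ((-(0:ℂ)) • a) * a))) 0 :=
      φ.hasFDerivAt.comp_hasDerivAt 0 ((hL a 0).const_mul z)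
    have hRa : HasDerivAt (fun t : ℂ => exp (t • a) * a)
        ((exp ((0:ℂ) • a) * a) * a) 0 := (hR a 0).mul_const a
    have htot : HasDerivAt (fun t : ℂ =>
        φ (z * -(exp ((-t) • a) * a)) (exp (t • a))
          + φ (z * exp ((-t) • a)) (exp (t • a) * a))
        ((φ (z * -(-(exp ((-(0:ℂ)) • a) * a) * a))) (exp ((0:ℂ) • a))
          + (φ (z * -(exp ((-(0:ℂ)) • a) * a))) (exp ((0:ℂ) • a) * a)
          + ((φ (z * -(exp ((-(0:ℂ)) • a) * a))) (exp ((0:ℂ) • a) * a)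
            + (φ (z * exp ((-(0:ℂ)) • a))) ((exp ((0:ℂ) • a) * a) * a))) 0 :=
      (d1.clm_apply (hR a 0)).add (hc.clm_apply hRa)
    have hzero : HasDerivAt (fun t : ℂ =>
        φ (z * -(exp ((-t) • a) * a)) (exp (t • a))
          + φ (z * exp ((-t) • a)) (exp (t • a) * a)) (0 : X) 0 := by
      have : (fun t : ℂ =>
          φ (z * -(exp ((-t) • a) * a)) (exp (t • a))
            + φ (z * exp ((-t) • a)) (exp (t • a) * a)) = fun _ => 0 :=
        funext fun t => hG a t
      rw [this]; exact hasDerivAt_const _ _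
    have e := htot.unique hzero
    simp only [neg_zero, zero_smul, exp_zero, one_mul, mul_one, neg_neg, neg_mul, mul_neg,
      map_neg, ContinuousLinearMap.neg_apply] at e
    rw [key0 (a * a)] at e
    -- e : φ (z*(a*a)) 1 - φ (z*a) a + (-(φ (z*a) a) + φ (z*(a*a)) 1) = 0  (some form)
    have h2 : (2 : ℂ) • φ (z * a) a = (2 : ℂ) • φ (z * (a * a)) 1 := by
      rw [two_smul, two_smul]
      have : φ (z * a) a + φ (z * a) a - (φ (z * (a * a)) 1 + φ (z * (a * a)) 1) = 0 := by
        rw [← neg_zero, ← e]; abel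
      exact sub_eq_zero.mp this
    exact smul_right_injective X two_ne_zero h2
  -- construct Φ
  refine ⟨(φ.flip 1).comp (ContinuousLinearMap.mul ℂ A z), fun a => rfl, ?_⟩
  intro a b
  have hsum := sq (a + b)
  rw [show z * (a + b) = z * a + z * b from mul_add z a b,
    show (a + b) * (a + b) = a * a + (a * b + (b * a + b * b)) by noncomm_ring] at hsum
  simp only [mul_add, map_add, ContinuousLinearMap.add_apply] at hsum
  show φ (z * a) b + φ (z * b) a = φ (z * (a * b + b * a)) 1
  rw [show z * (a * b + b * a) = z * (a * b) + z * (b * a) from mul_add z _ _, map_add,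
    ContinuousLinearMap.add_apply]
  calc φ (z * a) b + φ (z * b) a
      = (φ (z * a) a + φ (z * b) a + (φ (z * a) b + φ (z * b) b))
        - φ (z * a) a - φ (z * b) b := by abel
    _ = (φ (z * (a * a)) 1 + (φ (z * (a * b)) 1 + (φ (z * (b * a)) 1 + φ (z * (b * b)) 1)))
        - φ (z * a) a - φ (z * b) b := by rw [hsum]
    _ = (φ (z * (a * a)) 1 + (φ (z * (a * b)) 1 + (φ (z * (b * a)) 1 + φ (z * (b * b)) 1)))
        - φ (z * (a * a)) 1 - φ (z * (b * b)) 1 := by rw [sq a, sq b]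
    _ = φ (z * (a * b)) 1 + φ (z * (b * a)) 1 := by abel
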